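/- For every positive integer n, the length-4 spectral correlation set S₄(n) := {(λ₁, λ₂, λ₃, λ₄) ∈ Λ_n⁴ : λ₁ + λ₂ + λ₃ + λ₄ = 0} satisfies |S₄(n)| = 3·N_n·(N_n − 1). Equivalently, every 4-tuple of lattice points of Λ_n summing to zero consists of two antipodal pairs. -/

import Mathlib

noncomputable section

/-- The set `Λ_n` of lattice points on the circle of radius `√n`. -/
def Lam (n : ℕ) : Finset (ℤ × ℤ) :=
  (Finset.Icc (-(n : ℤ), -(n : ℤ)) ((n : ℤ), (n : ℤ))).filter
    fun l => l.1 ^ 2 + l.2 ^ 2 = (n : ℤ)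

/-- The spectral multiplicity `N_n = |Λ_n|`. -/
def Nn (n : ℕ) : ℕ := (Lam n).card

/-- The length-3 spectral correlation set
`S₃(n) = {(λ, λ', λ'') ∈ Λ_n³ : λ + λ' + λ'' = 0}`. -/
def S3 (n : ℕ) : Finset ((ℤ × ℤ) × (ℤ × ℤ) × (ℤ × ℤ)) :=
  ((Lam n) ×ˢ (Lam n) ×ˢ (Lam n)).filter fun t => t.1 + t.2.1 + t.2.2 = 0

/-- The length-4 spectral correlation set
`S₄(n) = {(λ₁, λ₂, λ₃, λ₄) ∈ Λ_n⁴ : λ₁ + λ₂ + λ₃ + λ₄ = 0}`. -/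
def S4 (n : ℕ) : Finset ((ℤ × ℤ) × (ℤ × ℤ) × (ℤ × ℤ) × (ℤ × ℤ)) :=
  ((Lam n) ×ˢ (Lam n) ×ˢ (Lam n) ×ˢ (Lam n)).filter
    fun t => t.1 + t.2.1 + t.2.2.1 + t.2.2.2 = 0

end

lemma key_antipodal {n : ℤ} {a b c d : ℤ × ℤ}
    (ha : a.1 ^ 2 + a.2 ^ 2 = n) (hb : b.1 ^ 2 + b.2 ^ 2 = n)
    (hc : c.1 ^ 2 + c.2 ^ 2 = n) (hd : d.1 ^ 2 + d.2 ^ 2 = n)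
    (hs : a + b + c + d = 0) :
    (b = -a ∧ d = -c) ∨ (c = -a ∧ d = -b) ∨ (c = -b ∧ d = -a) := by
  obtain ⟨a1, a2⟩ := a
  obtain ⟨b1, b2⟩ := b
  obtain ⟨c1, c2⟩ := c
  obtain ⟨d1, d2⟩ := d
  simp only [Prod.mk_add_mk, Prod.ext_iff, Prod.fst_zero, Prod.snd_zero, Prod.neg_mk] at *
  obtain ⟨hs1, hs2⟩ := hs
  have hd1 : d1 = -(a1 + b1 + c1) := by linarith
  have hd2 : d2 = -(a2 + b2 + c2) := by linarith
  subst hd1 hd2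
  have hd' : (a1 + b1 + c1) ^ 2 + (a2 + b2 + c2) ^ 2 = n := by linear_combination hd
  have h2 : 2 * ((a1*b1 + a2*b2) + (a1*c1 + a2*c2) + (b1*c1 + b2*c2)) = -2 * n := by
    linear_combination hd' - ha - hb - hc
  have hgram : n^3 + 2*(a1*b1 + a2*b2)*(a1*c1 + a2*c2)*(b1*c1 + b2*c2)
      - n*(b1*c1 + b2*c2)^2 - n*(a1*c1 + a2*c2)^2 - n*(a1*b1 + a2*b2)^2 = 0 := by
    linear_combination ((b1*c1 + b2*c2)^2 - (b1^2+b2^2)*(c1^2+c2^2)) * ha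
      + ((a1*c1 + a2*c2)^2 - n*(c1^2+c2^2)) * hb + ((a1*b1 + a2*b2)^2 - n^2) * hc
  have h4 : 4 * ((n + (a1*b1 + a2*b2)) * (n + (a1*c1 + a2*c2)) * (n + (b1*c1 + b2*c2))) = 0 := by
    linear_combination 2 * hgram
      + (n * ((a1*b1 + a2*b2) + (a1*c1 + a2*c2) + (b1*c1 + b2*c2) + n)) * h2
  have hfac : (n + (a1*b1 + a2*b2)) * (n + (a1*c1 + a2*c2)) * (n + (b1*c1 + b2*c2)) = 0 := by
    linarith
  have hPQR : ((a1+b1)^2 + (a2+b2)^2) * (((a1+c1)^2 + (a2+c2)^2) * ((b1+c1)^2 + (b2+c2)^2)) = 0 := by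
    linear_combination (8 : ℤ) * hfac
      + (((a1+c1)^2 + (a2+c2)^2) * ((b1+c1)^2 + (b2+c2)^2)) * (ha + hb)
      + ((2*n + 2*(a1*b1+a2*b2)) * ((b1+c1)^2 + (b2+c2)^2)) * (ha + hc)
      + ((2*n + 2*(a1*b1+a2*b2)) * (2*n + 2*(a1*c1+a2*c2))) * (hb + hc)
  rcases mul_eq_zero.mp hPQR with h | h'
  · left
    obtain ⟨e1, e2⟩ := (add_eq_zero_iff_of_nonneg (sq_nonneg _) (sq_nonneg _)).mp h
    rw [sq_eq_zero_iff] at e1 e2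
    refine ⟨⟨by linarith, by linarith⟩, ⟨by linarith, by linarith⟩⟩
  · rcases mul_eq_zero.mp h' with h | h
    · right; left
      obtain ⟨e1, e2⟩ := (add_eq_zero_iff_of_nonneg (sq_nonneg _) (sq_nonneg _)).mp h
      rw [sq_eq_zero_iff] at e1 e2
      refine ⟨⟨by linarith, by linarith⟩, ⟨by linarith, by linarith⟩⟩
    · right; right
      obtain ⟨e1, e2⟩ := (add_eq_zero_iff_of_nonneg (sq_nonneg _) (sq_nonneg _)).mp h
      rw [sq_eq_zero_iff] at e1 e2
      refine ⟨⟨by linarith, by linarith⟩, ⟨by linarith, by linarith⟩⟩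

lemma mem_Lam {n : ℕ} {l : ℤ × ℤ} : l ∈ Lam n ↔ l.1 ^ 2 + l.2 ^ 2 = (n : ℤ) := by
  constructor
  · exact fun h => (Finset.mem_filter.mp h).2
  · intro h
    refine Finset.mem_filter.mpr ⟨?_, h⟩
    rw [Finset.mem_Icc, Prod.le_def, Prod.le_def]
    have hn0 : (0 : ℤ) ≤ (n : ℤ) := Int.natCast_nonneg n
    have h1 : l.1 ^ 2 ≤ (n : ℤ) := by nlinarith [sq_nonneg l.2]
    have h2 : l.2 ^ 2 ≤ (n : ℤ) := by nlinarith [sq_nonneg l.1]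
    have hn2 : (n : ℤ) ≤ (n : ℤ) ^ 2 := by
      have := Nat.le_mul_of_pos_left n (Nat.zero_lt_succ 0)
      nlinarith
    refine ⟨⟨?_, ?_⟩, ?_, ?_⟩ <;> dsimp only
    · nlinarith [sq_nonneg (l.1 + (n : ℤ)), sq_nonneg l.2]
    · nlinarith [sq_nonneg (l.2 + (n : ℤ)), sq_nonneg l.1]
    · nlinarith [sq_nonneg (l.1 - (n : ℤ)), sq_nonneg l.2]
    · nlinarith [sq_nonneg (l.2 - (n : ℤ)), sq_nonneg l.1]

lemma neg_mem_Lam {n : ℕ} {l : ℤ × ℤ} (h : l ∈ Lam n) : -l ∈ Lam n := by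
  rw [mem_Lam] at h ⊢
  simp only [Prod.fst_neg, Prod.snd_neg]
  linear_combination h

lemma mem_S4 {n : ℕ} {t : (ℤ × ℤ) × (ℤ × ℤ) × (ℤ × ℤ) × (ℤ × ℤ)} :
    t ∈ S4 n ↔ (t.1 ∈ Lam n ∧ t.2.1 ∈ Lam n ∧ t.2.2.1 ∈ Lam n ∧ t.2.2.2 ∈ Lam n) ∧
      t.1 + t.2.1 + t.2.2.1 + t.2.2.2 = 0 := by
  simp [S4, Finset.mem_filter, Finset.mem_product, and_assoc]

/-- Pattern set: second entry is antipode of first, fourth of third. -/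
noncomputable def PA (n : ℕ) : Finset ((ℤ × ℤ) × (ℤ × ℤ) × (ℤ × ℤ) × (ℤ × ℤ)) :=
  (S4 n).filter fun t => t.2.1 = -t.1 ∧ t.2.2.2 = -t.2.2.1

noncomputable def PB (n : ℕ) : Finset ((ℤ × ℤ) × (ℤ × ℤ) × (ℤ × ℤ) × (ℤ × ℤ)) :=
  (S4 n).filter fun t => t.2.2.1 = -t.1 ∧ t.2.2.2 = -t.2.1

noncomputable def PC (n : ℕ) : Finset ((ℤ × ℤ) × (ℤ × ℤ) × (ℤ × ℤ) × (ℤ × ℤ)) :=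
  (S4 n).filter fun t => t.2.2.1 = -t.2.1 ∧ t.2.2.2 = -t.1

lemma S4_eq_cover (n : ℕ) : S4 n = PA n ∪ PB n ∪ PC n := by
  ext t
  simp only [Finset.mem_union, PA, PB, PC, Finset.mem_filter]
  constructor
  · intro ht
    obtain ⟨⟨h1, h2, h3, h4⟩, hsum⟩ := mem_S4.mp ht
    rcases key_antipodal (mem_Lam.mp h1) (mem_Lam.mp h2) (mem_Lam.mp h3) (mem_Lam.mp h4) hsum with
      h | h | h
    · exact Or.inl (Or.inl ⟨ht, h⟩)
    · exact Or.inl (Or.inr ⟨ht, h⟩)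
    · exact Or.inr ⟨ht, h⟩
  · rintro ((⟨h, -⟩ | ⟨h, -⟩) | ⟨h, -⟩) <;> exact h

lemma card_PA (n : ℕ) : (PA n).card = Nn n * Nn n := by
  rw [Nn, ← Finset.card_product]
  apply Finset.card_nbij' (fun t => (t.1, t.2.2.1)) (fun p => (p.1, -p.1, p.2, -p.2))
  · intro t ht
    simp only [PA, Finset.mem_coe, Finset.mem_filter] at ht
    obtain ⟨hm, -⟩ := mem_S4.mp ht.1
    exact Finset.mem_product.mpr ⟨hm.1, hm.2.2.1⟩
  · intro p hp
    obtain ⟨h1, h2⟩ := Finset.mem_product.mp hp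
    refine Finset.mem_filter.mpr ⟨mem_S4.mpr ⟨⟨h1, neg_mem_Lam h1, h2, neg_mem_Lam h2⟩, by ring⟩,
      rfl, rfl⟩
  · intro t ht
    simp only [PA, Finset.mem_coe, Finset.mem_filter] at ht
    obtain ⟨-, hb, hd⟩ := ht
    obtain ⟨x1, x2, x3, x4⟩ := t
    simp only at hb hd ⊢
    simp [hb, hd]
  · intro p hp; rfl

lemma card_PB (n : ℕ) : (PB n).card = Nn n * Nn n := by
  rw [Nn, ← Finset.card_product]
  apply Finset.card_nbij' (fun t => (t.1, t.2.1)) (fun p => (p.1, p.2, -p.1, -p.2))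
  · intro t ht
    simp only [PB, Finset.mem_coe, Finset.mem_filter] at ht
    obtain ⟨hm, -⟩ := mem_S4.mp ht.1
    exact Finset.mem_product.mpr ⟨hm.1, hm.2.1⟩
  · intro p hp
    obtain ⟨h1, h2⟩ := Finset.mem_product.mp hp
    refine Finset.mem_filter.mpr ⟨mem_S4.mpr ⟨⟨h1, h2, neg_mem_Lam h1, neg_mem_Lam h2⟩, by ring⟩,
      rfl, rfl⟩
  · intro t ht
    simp only [PB, Finset.mem_coe, Finset.mem_filter] at ht
    obtain ⟨-, hc, hd⟩ := ht
    obtain ⟨x1, x2, x3, x4⟩ := t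
    simp only at hc hd ⊢
    simp [hc, hd]
  · intro p hp; rfl

lemma card_PC (n : ℕ) : (PC n).card = Nn n * Nn n := by
  rw [Nn, ← Finset.card_product]
  apply Finset.card_nbij' (fun t => (t.1, t.2.1)) (fun p => (p.1, p.2, -p.2, -p.1))
  · intro t ht
    simp only [PC, Finset.mem_coe, Finset.mem_filter] at ht
    obtain ⟨hm, -⟩ := mem_S4.mp ht.1
    exact Finset.mem_product.mpr ⟨hm.1, hm.2.1⟩
  · intro p hp
    obtain ⟨h1, h2⟩ := Finset.mem_product.mp hp
    refine Finset.mem_filter.mpr ⟨mem_S4.mpr ⟨⟨h1, h2, neg_mem_Lam h2, neg_mem_Lam h1⟩, by ring⟩,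
      rfl, rfl⟩
  · intro t ht
    simp only [PC, Finset.mem_coe, Finset.mem_filter] at ht
    obtain ⟨-, hc, hd⟩ := ht
    obtain ⟨x1, x2, x3, x4⟩ := t
    simp only at hc hd ⊢
    simp [hc, hd]
  · intro p hp; rfl

lemma card_PAB (n : ℕ) : (PA n ∩ PB n).card = Nn n := by
  rw [Nn]
  apply Finset.card_nbij' (fun t => t.1) (fun a => (a, -a, -a, a))
  · intro t ht
    rw [Finset.mem_coe, Finset.mem_inter] at ht
    obtain ⟨hm, -⟩ := mem_S4.mp (Finset.mem_filter.mp ht.1).1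
    exact hm.1
  · intro a ha
    refine Finset.mem_inter.mpr ⟨Finset.mem_filter.mpr ⟨?_, by simp⟩,
      Finset.mem_filter.mpr ⟨?_, by simp⟩⟩ <;>
      exact mem_S4.mpr ⟨⟨ha, neg_mem_Lam ha, neg_mem_Lam ha, ha⟩, by ring⟩
  · intro t ht
    rw [Finset.mem_coe, Finset.mem_inter] at ht
    obtain ⟨-, hb, hd⟩ := Finset.mem_filter.mp ht.1
    obtain ⟨-, hc, hd'⟩ := Finset.mem_filter.mp ht.2
    obtain ⟨x1, x2, x3, x4⟩ := t
    simp only at hb hc hd hd' ⊢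
    simp [hb, hc, hd, hd']
  · intro a ha; rfl

lemma card_PAC (n : ℕ) : (PA n ∩ PC n).card = Nn n := by
  rw [Nn]
  apply Finset.card_nbij' (fun t => t.1) (fun a => (a, -a, a, -a))
  · intro t ht
    rw [Finset.mem_coe, Finset.mem_inter] at ht
    obtain ⟨hm, -⟩ := mem_S4.mp (Finset.mem_filter.mp ht.1).1
    exact hm.1
  · intro a ha
    refine Finset.mem_inter.mpr ⟨Finset.mem_filter.mpr ⟨?_, by simp⟩,
      Finset.mem_filter.mpr ⟨?_, by simp⟩⟩ <;>
      exact mem_S4.mpr ⟨⟨ha, neg_mem_Lam ha, ha, neg_mem_Lam ha⟩, by ring⟩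
  · intro t ht
    rw [Finset.mem_coe, Finset.mem_inter] at ht
    obtain ⟨-, hb, hd⟩ := Finset.mem_filter.mp ht.1
    obtain ⟨-, hc, hd'⟩ := Finset.mem_filter.mp ht.2
    obtain ⟨x1, x2, x3, x4⟩ := t
    simp only at hb hc hd hd' ⊢
    simp [hb, hc, hd, hd']
  · intro a ha; rfl

lemma card_PBC (n : ℕ) : (PB n ∩ PC n).card = Nn n := by
  rw [Nn]
  apply Finset.card_nbij' (fun t => t.1) (fun a => (a, a, -a, -a))
  · intro t ht
    rw [Finset.mem_coe, Finset.mem_inter] at ht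
    obtain ⟨hm, -⟩ := mem_S4.mp (Finset.mem_filter.mp ht.1).1
    exact hm.1
  · intro a ha
    refine Finset.mem_inter.mpr ⟨Finset.mem_filter.mpr ⟨?_, by simp⟩,
      Finset.mem_filter.mpr ⟨?_, by simp⟩⟩ <;>
      exact mem_S4.mpr ⟨⟨ha, ha, neg_mem_Lam ha, neg_mem_Lam ha⟩, by ring⟩
  · intro t ht
    rw [Finset.mem_coe, Finset.mem_inter] at ht
    obtain ⟨-, hc, hd⟩ := Finset.mem_filter.mp ht.1
    obtain ⟨-, hc', hd'⟩ := Finset.mem_filter.mp ht.2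
    obtain ⟨x1, x2, x3, x4⟩ := t
    simp only at hc hd hc' hd' ⊢
    have hb : x2 = x1 := by
      have h := hc.symm.trans hc'
      exact (neg_injective h.symm)
    simp [hb, hc', hd']
  · intro a ha; rfl

lemma triple_empty (n : ℕ) (hn : 0 < n) : PA n ∩ PC n ∩ (PB n ∩ PC n) = ∅ := by
  rw [Finset.eq_empty_iff_forall_notMem]
  intro t ht
  simp only [Finset.mem_inter] at ht
  obtain ⟨⟨htA, htC⟩, htB, -⟩ := ht
  obtain ⟨hts, hb, -⟩ := Finset.mem_filter.mp htA
  obtain ⟨-, hc, -⟩ := Finset.mem_filter.mp htC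
  obtain ⟨-, hc', -⟩ := Finset.mem_filter.mp htB
  -- hb : t.2.1 = -t.1 ; hc : t.2.2.1 = -t.2.1 ; hc' : t.2.2.1 = -t.1
  have h1 : t.1 = -t.1 := by
    rw [hb, neg_neg] at hc
    exact hc.symm.trans hc'
  have h0 : t.1 = 0 := by
    have hx := congrArg Prod.fst h1
    have hy := congrArg Prod.snd h1
    simp only [Prod.fst_neg, Prod.snd_neg] at hx hy
    have hx0 : t.1.1 = 0 := by omega
    have hy0 : t.1.2 = 0 := by omega
    exact Prod.ext hx0 hy0
  obtain ⟨hm, -⟩ := mem_S4.mp hts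
  have hl := mem_Lam.mp hm.1
  rw [h0] at hl
  simp only [Prod.fst_zero, Prod.snd_zero] at hl
  have : (n : ℤ) = 0 := by linarith [hl]
  omega

/-- The length-4 spectral correlation set satisfies
`|S₄(n)| = 3N_n(N_n - 1)`. -/
theorem S4_card_eq (n : ℕ) (hn : 0 < n) :
    ((S4 n).card : ℤ) = 3 * (Nn n : ℤ) * ((Nn n : ℤ) - 1) := by
  have e1 := Finset.card_union_add_card_inter (PA n ∪ PB n) (PC n)
  have e2 := Finset.card_union_add_card_inter (PA n) (PB n)
  have e3 := Finset.card_union_add_card_inter (PA n ∩ PC n) (PB n ∩ PC n)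
  rw [Finset.union_inter_distrib_right] at e1
  rw [triple_empty n hn, Finset.card_empty] at e3
  rw [← S4_eq_cover] at e1
  rw [card_PA, card_PB, card_PAB] at e2
  rw [card_PAC, card_PBC] at e3
  have e3' : (((PA n ∩ PC n) ∪ (PB n ∩ PC n)).card : ℤ) = (Nn n : ℤ) + (Nn n : ℤ) := by
    exact_mod_cast congrArg (Nat.cast : ℕ → ℤ) e3
  have e2' : ((PA n ∪ PB n).card : ℤ) + (Nn n : ℤ)
      = (Nn n : ℤ) * (Nn n : ℤ) + (Nn n : ℤ) * (Nn n : ℤ) := by exact_mod_cast e2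
  have e1' : ((S4 n).card : ℤ) + (((PA n ∩ PC n) ∪ (PB n ∩ PC n)).card : ℤ)
      = ((PA n ∪ PB n).card : ℤ) + (Nn n : ℤ) * (Nn n : ℤ) := by
    rw [card_PC] at e1; exact_mod_cast e1
  ring_nf
  ring_nf at e1' e2' e3'
  linarith
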